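/- Hockey-stick divergence in terms of privacy-loss tail probabilities: let P, Q be mutually absolutely continuous probability measures and ε ∈ ℝ. Then H_{e^ε}(P‖Q) = P({ω : log((dP/dQ)(ω)) > ε}) − e^ε · Q({ω : log((dQ/dP)(ω)) < −ε}). Consequently, P(S) ≤ e^ε Q(S) + δ holds for every measurable set S if and only if P({log(dP/dQ) > ε}) − e^ε · Q({log(dQ/dP) < −ε}) ≤ δ. -/

import Mathlib

open MeasureTheory

/-- The hockey-stick divergence `H_α(P‖Q) = ∫ (p − α·q)₊ dμ` with `μ = P + Q`. -/
noncomputable def hockeyStick {Ω : Type*} [MeasurableSpace Ω] (α : ℝ) (P Q : Measure Ω) : ℝ :=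
  ∫ ω, max ((P.rnDeriv (P + Q) ω).toReal - α * (Q.rnDeriv (P + Q) ω).toReal) 0 ∂(P + Q)

theorem hockeyStick_tail_probabilities
    {Ω : Type*} [MeasurableSpace Ω]
    (P Q : Measure Ω) [IsProbabilityMeasure P] [IsProbabilityMeasure Q]
    (hPQ : P ≪ Q) (hQP : Q ≪ P) (ε : ℝ) :
    hockeyStick (Real.exp ε) P Q
      = (P {ω | ε < Real.log ((P.rnDeriv Q ω).toReal)}).toReal
        - Real.exp ε * (Q {ω | Real.log ((Q.rnDeriv P ω).toReal) < -ε}).toReal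
    ∧ ∀ δ : ℝ,
        ((∀ S : Set Ω, MeasurableSet S →
            (P S).toReal ≤ Real.exp ε * (Q S).toReal + δ)
          ↔ (P {ω | ε < Real.log ((P.rnDeriv Q ω).toReal)}).toReal
              - Real.exp ε * (Q {ω | Real.log ((Q.rnDeriv P ω).toReal) < -ε}).toReal ≤ δ) := by
  set μ : Measure Ω := P + Q with hμdef
  set α : ℝ := Real.exp ε with hαdef
  set p : Ω → ENNReal := P.rnDeriv μ with hpdef
  set q : Ω → ENNReal := Q.rnDeriv μ with hqdef
  set A : Set Ω := {ω | ε < Real.log ((P.rnDeriv Q ω).toReal)} with hAdef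
  set B : Set Ω := {ω | Real.log ((Q.rnDeriv P ω).toReal) < -ε} with hBdef
  set S₀ : Set Ω := {ω | α * (q ω).toReal < (p ω).toReal} with hS₀def
  have hPμ : P ≪ μ := Measure.absolutelyContinuous_of_le (Measure.le_add_right le_rfl)
  have hQμ : Q ≪ μ := Measure.absolutelyContinuous_of_le (Measure.le_add_left le_rfl)
  have hS₀meas : MeasurableSet S₀ :=
    measurableSet_lt (measurable_const.mul (Measure.measurable_rnDeriv _ _).ennreal_toReal)
      (Measure.measurable_rnDeriv _ _).ennreal_toReal
  -- a.e. facts with respect to μ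
  have haeμ : ∀ {pr : Ω → Prop}, (∀ᵐ ω ∂P, pr ω) → (∀ᵐ ω ∂Q, pr ω) → ∀ᵐ ω ∂μ, pr ω := by
    intro pr h1 h2
    rw [hμdef, ae_add_measure_iff]; exact ⟨h1, h2⟩
  have hp_pos : ∀ᵐ ω ∂μ, 0 < p ω :=
    haeμ (Measure.rnDeriv_pos hPμ) (hQP.ae_le (Measure.rnDeriv_pos hPμ))
  have hq_pos : ∀ᵐ ω ∂μ, 0 < q ω :=
    haeμ (hPQ.ae_le (Measure.rnDeriv_pos hQμ)) (Measure.rnDeriv_pos hQμ)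
  have hq_top : ∀ᵐ ω ∂μ, q ω < ⊤ := Measure.rnDeriv_lt_top Q μ
  have hf_pos : ∀ᵐ ω ∂μ, 0 < P.rnDeriv Q ω :=
    haeμ (Measure.rnDeriv_pos hPQ) (hQP.ae_le (Measure.rnDeriv_pos hPQ))
  have hf_top : ∀ᵐ ω ∂μ, P.rnDeriv Q ω < ⊤ :=
    haeμ (hPQ.ae_le (Measure.rnDeriv_lt_top P Q)) (Measure.rnDeriv_lt_top P Q)
  have hmul : ∀ᵐ ω ∂μ, P.rnDeriv Q ω * q ω = p ω := Measure.rnDeriv_mul_rnDeriv hPQ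
  have hinv : ∀ᵐ ω ∂μ, (P.rnDeriv Q ω)⁻¹ = Q.rnDeriv P ω :=
    haeμ (Measure.inv_rnDeriv hPQ) (hQP.ae_le (Measure.inv_rnDeriv hPQ))
  -- the three sets agree a.e.
  have hiff : ∀ᵐ ω ∂μ, (ω ∈ S₀ ↔ ω ∈ A) ∧ (ω ∈ S₀ ↔ ω ∈ B) := by
    filter_upwards [hq_pos, hq_top, hf_pos, hf_top, hmul, hinv] with ω hq0 hqt hf0 hft hm hi
    have hqt' : 0 < (q ω).toReal := ENNReal.toReal_pos hq0.ne' hqt.ne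
    have hft' : 0 < (P.rnDeriv Q ω).toReal := ENNReal.toReal_pos hf0.ne' hft.ne
    have hS : ω ∈ S₀ ↔ α < (P.rnDeriv Q ω).toReal := by
      rw [hS₀def, Set.mem_setOf_eq, ← hm, ENNReal.toReal_mul,
        mul_lt_mul_iff_of_pos_right hqt']
    have hlog : α < (P.rnDeriv Q ω).toReal ↔ ε < Real.log ((P.rnDeriv Q ω).toReal) := by
      rw [hαdef, Real.lt_log_iff_exp_lt hft']
    constructor
    · rw [hS, hAdef, Set.mem_setOf_eq, hlog]
    · rw [hS, hBdef, Set.mem_setOf_eq, ← hi, ENNReal.toReal_inv, Real.log_inv,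
        neg_lt_neg_iff, ← hlog]
  have hiffP : ∀ᵐ ω ∂P, (ω ∈ S₀ ↔ ω ∈ A) ∧ (ω ∈ S₀ ↔ ω ∈ B) := hPμ.ae_le hiff
  have hiffQ : ∀ᵐ ω ∂Q, (ω ∈ S₀ ↔ ω ∈ A) ∧ (ω ∈ S₀ ↔ ω ∈ B) := hQμ.ae_le hiff
  have hPA : P S₀ = P A :=
    measure_congr (Filter.eventuallyEq_set.mpr (hiffP.mono fun ω h => h.1))
  have hQB : Q S₀ = Q B :=
    measure_congr (Filter.eventuallyEq_set.mpr (hiffQ.mono fun ω h => h.2))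
  -- integrability
  have hip : Integrable (fun ω => (p ω).toReal) μ := Measure.integrable_toReal_rnDeriv
  have hiq : Integrable (fun ω => (q ω).toReal) μ := Measure.integrable_toReal_rnDeriv
  set g : Ω → ℝ := fun ω => (p ω).toReal - α * (q ω).toReal with hgdef
  have hig : Integrable g μ := hip.sub (hiq.const_mul α)
  have higp : Integrable (fun ω => max (g ω) 0) μ := hig.pos_part
  -- set integral of g over a measurable set
  have hsetg : ∀ S : Set Ω, MeasurableSet S →
      ∫ ω in S, g ω ∂μ = (P S).toReal - α * (Q S).toReal := by
    intro S hS
    rw [hgdef]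
    rw [integral_sub (hip.restrict) ((hiq.restrict).const_mul α), integral_const_mul,
      Measure.setIntegral_toReal_rnDeriv hPμ S, Measure.setIntegral_toReal_rnDeriv hQμ S]
    rfl
  -- main identity: hockeyStick = P S₀ - α Q S₀
  have hH : hockeyStick α P Q = (P S₀).toReal - α * (Q S₀).toReal := by
    have h1 : hockeyStick α P Q = ∫ ω, max (g ω) 0 ∂μ := rfl
    rw [h1, ← integral_add_compl hS₀meas higp]
    have h2 : ∫ ω in S₀, max (g ω) 0 ∂μ = ∫ ω in S₀, g ω ∂μ := by
      refine setIntegral_congr_fun hS₀meas fun ω hω => ?_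
      exact max_eq_left (le_of_lt (sub_pos.mpr hω))
    have h3 : ∫ ω in S₀ᶜ, max (g ω) 0 ∂μ = 0 := by
      rw [setIntegral_congr_fun hS₀meas.compl (g := fun _ => (0:ℝ))
        (fun ω hω => max_eq_right (sub_nonpos.mpr (not_lt.mp hω)))]
      simp
    rw [h2, h3, add_zero, hsetg S₀ hS₀meas]
  -- inequality for arbitrary measurable S
  have hineq : ∀ S : Set Ω, MeasurableSet S →
      (P S).toReal - α * (Q S).toReal ≤ hockeyStick α P Q := by
    intro S hS
    rw [← hsetg S hS]
    calc ∫ ω in S, g ω ∂μ ≤ ∫ ω in S, max (g ω) 0 ∂μ :=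
          integral_mono hig.restrict higp.restrict fun ω => le_max_left _ _
      _ ≤ ∫ ω, max (g ω) 0 ∂μ :=
          setIntegral_le_integral higp (Filter.Eventually.of_forall fun ω => le_max_right _ _)
      _ = hockeyStick α P Q := rfl
  have hmain : hockeyStick α P Q = (P A).toReal - α * (Q B).toReal := by
    rw [hH, hPA, hQB]
  refine ⟨hmain, fun δ => ⟨fun h => ?_, fun h S hS => ?_⟩⟩
  · have := h S₀ hS₀meas
    rw [hPA, hQB] at this
    linarith
  · have h1 := hineq S hS
    rw [hmain] at h1
    linarith
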